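/- arXiv:0908.2683 — 2 statements merged into one kernel-verified Lean document; each statement's English description precedes it below -/
import Mathlib

section
/- For the constant-speed control law u = -U·(p - c)/‖p - c‖ if ‖p - c‖ ≥ 1 and u = -U·(p - c) otherwise (U > 0, c fixed), every solution starting in a compact convex set containing c converges to c as t → ∞. -/
open scoped Topology

/-- for the constant-speed control law (`u = -U (p-c)/‖p-c‖`
when `‖p - c‖ ≥ 1` and `u = -U (p - c)` otherwise), every solution starting
in a compact convex set containing `c` converges to `c`. -/
theorem constant_speed_convergence {d : ℕ}
    (U : ℝ) (hU : 0 < U)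
    (c : EuclideanSpace ℝ (Fin d))
    (u : EuclideanSpace ℝ (Fin d) → EuclideanSpace ℝ (Fin d))
    (hu : ∀ x, u x =
      if 1 ≤ ‖x - c‖ then -(U / ‖x - c‖) • (x - c) else -U • (x - c))
    (K : Set (EuclideanSpace ℝ (Fin d))) (hKc : IsCompact K)
    (hKconv : Convex ℝ K) (hcK : c ∈ K)
    (p : ℝ → EuclideanSpace ℝ (Fin d)) (hp0 : p 0 ∈ K)
    (hp : ∀ t : ℝ, HasDerivAt p (u (p t)) t) :
    Filter.Tendsto p Filter.atTop (𝓝 c) := by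
  set V : ℝ → ℝ := fun t => ‖p t - c‖ ^ 2 with hV
  set D : ℝ → ℝ := fun t =>
    if 1 ≤ ‖p t - c‖ then -2 * U * ‖p t - c‖ else -2 * U * ‖p t - c‖ ^ 2 with hD
  have hVderiv : ∀ t, HasDerivAt V (D t) t := by
    intro t
    have hq : HasDerivAt (fun s => p s - c) (u (p t)) t := (hp t).sub_const c
    have hinner := hq.inner ℝ hq
    have hVW : V = fun s => @inner ℝ _ _ (p s - c) (p s - c) := by
      funext s
      rw [real_inner_self_eq_norm_sq]
    rw [hVW]
    have hval : @inner ℝ _ _ (p t - c) (u (p t)) =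
        if 1 ≤ ‖p t - c‖ then -U * ‖p t - c‖ else -U * ‖p t - c‖ ^ 2 := by
      rw [hu]
      split_ifs with h
      · have hn : (0:ℝ) < ‖p t - c‖ := lt_of_lt_of_le one_pos h
        rw [real_inner_smul_right, real_inner_self_eq_norm_sq]
        field_simp
      · rw [real_inner_smul_right, real_inner_self_eq_norm_sq]
    have hsum : @inner ℝ _ _ (p t - c) (u (p t)) + @inner ℝ _ _ (u (p t)) (p t - c)
        = D t := by
      have hc : @inner ℝ _ _ (u (p t)) (p t - c) = @inner ℝ _ _ (p t - c) (u (p t)) :=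
        real_inner_comm _ _
      rw [hc, hval]
      simp only [hD]
      split_ifs <;> ring
    rw [hsum] at hinner
    exact hinner
  have hDnonpos : ∀ t, D t ≤ 0 := by
    intro t
    simp only [hD]
    have h1 : (0:ℝ) ≤ ‖p t - c‖ := norm_nonneg _
    split_ifs <;> nlinarith
  have hVanti : Antitone V := by
    apply antitone_of_deriv_nonpos
    · exact fun t => (hVderiv t).differentiableAt
    · intro t; rw [(hVderiv t).deriv]; exact hDnonpos t
  set R : ℝ := max ‖p 0 - c‖ 1 with hR
  have hR1 : (1:ℝ) ≤ R := le_max_right _ _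
  have hRpos : (0:ℝ) < R := lt_of_lt_of_le one_pos hR1
  set k : ℝ := 2 * U / R with hk
  have hkpos : 0 < k := div_pos (by linarith) hRpos
  have hbound : ∀ t : ℝ, 0 ≤ t → ‖p t - c‖ ≤ R := by
    intro t ht
    have h1 : V t ≤ V 0 := hVanti ht
    simp only [hV] at h1
    have h2 : ‖p 0 - c‖ ≤ R := le_max_left _ _
    nlinarith [norm_nonneg (p t - c), norm_nonneg (p 0 - c)]
  set g : ℝ → ℝ := fun t => V t * Real.exp (k * t) with hg
  have hgderiv : ∀ t, HasDerivAt g ((D t + k * V t) * Real.exp (k * t)) t := by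
    intro t
    have hlin : HasDerivAt (fun s : ℝ => k * s) k t := by
      simpa using (hasDerivAt_id t).const_mul k
    have he := hlin.exp
    have : HasDerivAt (fun s => V s * Real.exp (k * s))
        (D t * Real.exp (k * t) + V t * (Real.exp (k * t) * k)) t := (hVderiv t).mul he
    convert this using 1
    ring
  have hganti : AntitoneOn g (Set.Ici 0) := by
    apply antitoneOn_of_deriv_nonpos (convex_Ici 0)
    · have hVc : Continuous V :=
        Differentiable.continuous (fun t => (hVderiv t).differentiableAt)
      exact (hVc.mul (by continuity)).continuousOn
    · intro t ht
      exact ((hgderiv t).differentiableAt).differentiableWithinAt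
    · intro t ht
      rw [(hgderiv t).deriv]
      have ht0 : (0:ℝ) ≤ t := le_of_lt (by simpa using ht)
      have hn : ‖p t - c‖ ≤ R := hbound t ht0
      have hn0 : (0:ℝ) ≤ ‖p t - c‖ := norm_nonneg _
      have hexp : (0:ℝ) < Real.exp (k * t) := Real.exp_pos _
      have key : D t + k * V t ≤ 0 := by
        simp only [hD, hV, hk]
        split_ifs with h
        · have hle : 2 * U / R * ‖p t - c‖ ^ 2 ≤ 2 * U * ‖p t - c‖ := by
            rw [div_mul_eq_mul_div, div_le_iff₀ hRpos]
            nlinarith [mul_le_mul_of_nonneg_left hn hn0, hU]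
          linarith
        · have hkle : 2 * U / R ≤ 2 * U := by
            rw [div_le_iff₀ hRpos]; nlinarith
          nlinarith [sq_nonneg ‖p t - c‖]
      exact mul_nonpos_of_nonpos_of_nonneg key hexp.le
  have hdecay : ∀ t, 0 ≤ t → V t ≤ V 0 * Real.exp (-(k * t)) := by
    intro t ht
    have hgt : g t ≤ g 0 := hganti Set.self_mem_Ici ht ht
    have hexp : (0:ℝ) < Real.exp (k * t) := Real.exp_pos _
    have hg0 : g 0 = V 0 := by simp [hg]
    have hVt : V t * Real.exp (k * t) ≤ V 0 := by rw [← hg0]; exact hgt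
    rw [Real.exp_neg, mul_comm (V 0), inv_mul_eq_div, le_div_iff₀ hexp]
    linarith
  have hVlim : Filter.Tendsto V Filter.atTop (𝓝 0) := by
    have hupper : Filter.Tendsto (fun t => V 0 * Real.exp (-(k * t)))
        Filter.atTop (𝓝 0) := by
      have h1 : Filter.Tendsto (fun t : ℝ => k * t) Filter.atTop Filter.atTop :=
        Filter.Tendsto.const_mul_atTop hkpos Filter.tendsto_id
      have h2 := (Real.tendsto_exp_neg_atTop_nhds_zero).comp h1
      have h3 := h2.const_mul (V 0)
      simpa [Function.comp] using h3
    apply tendsto_of_tendsto_of_tendsto_of_le_of_le' tendsto_const_nhds hupper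
    · filter_upwards with t using sq_nonneg _
    · filter_upwards [Filter.eventually_ge_atTop 0] with t ht using hdecay t ht
  have hnorm : Filter.Tendsto (fun t => ‖p t - c‖) Filter.atTop (𝓝 0) := by
    have h4 := (Real.continuous_sqrt.tendsto 0).comp hVlim
    simp only [Real.sqrt_zero] at h4
    have heq : (Real.sqrt ∘ V) = fun t => ‖p t - c‖ := by
      funext t; simp [hV, Real.sqrt_sq (norm_nonneg _)]
    rwa [heq] at h4
  rw [tendsto_iff_norm_sub_tendsto_zero]
  exact hnorm
end

section
/- Let φ : Q → [0,∞) be integrable on a measurable set V ⊂ ℝ^d, let f(r) = k·e^{-αr²} with k, α > 0, and define H(p) = ∫_V φ(q)·f(‖p - q‖) dq. Then the gradient satisfies ∇_p H(p) = -2α·∫_V φ(q)·k·e^{-α‖p-q‖²}·(p - q) dq, i.e., ∇_p H(p) = -M̃·(p - C̃) where M̃ = ∫_V φ̃(q) dq, C̃ = (1/M̃)∫_V q·φ̃(q) dq and φ̃(q) = 2α·k·e^{-α‖p-q‖²}·φ(q) (assuming M̃ > 0). -/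
open MeasureTheory

section aux

open Real InnerProductSpace

variable {E : Type*} [NormedAddCommGroup E] [InnerProductSpace ℝ E] [CompleteSpace E]

lemma gauss_mul_le (α : ℝ) (hα : 0 < α) (r : ℝ) (hr : 0 ≤ r) :
    Real.exp (-α * r ^ 2) * r ≤ (Real.sqrt α)⁻¹ := by
  have hs : 0 < Real.sqrt α := Real.sqrt_pos.2 hα
  have h1 : Real.sqrt α * r ≤ Real.exp (α * r ^ 2) := by
    have h2 : Real.sqrt α * r ≤ 1 + (Real.sqrt α * r) ^ 2 := by
      nlinarith [sq_nonneg (Real.sqrt α * r - 1)]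
    have h3 : 1 + (Real.sqrt α * r) ^ 2 ≤ Real.exp ((Real.sqrt α * r) ^ 2) := by
      linarith [Real.add_one_le_exp ((Real.sqrt α * r) ^ 2)]
    have h4 : (Real.sqrt α * r) ^ 2 = α * r ^ 2 := by
      rw [mul_pow, Real.sq_sqrt hα.le]
    rw [h4] at h3
    linarith
  have hEm : 0 < Real.exp (-α * r ^ 2) := Real.exp_pos _
  have hE : Real.exp (-α * r ^ 2) * Real.exp (α * r ^ 2) = 1 := by
    rw [← Real.exp_add, show -α * r ^ 2 + α * r ^ 2 = 0 by ring, Real.exp_zero]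
  have h6 := mul_le_mul_of_nonneg_left h1
    (mul_nonneg (inv_nonneg.2 hs.le) hEm.le)
  have hcalc1 : (Real.sqrt α)⁻¹ * Real.exp (-α * r ^ 2) * (Real.sqrt α * r)
      = Real.exp (-α * r ^ 2) * r := by
    field_simp
  have hcalc2 : (Real.sqrt α)⁻¹ * Real.exp (-α * r ^ 2) * Real.exp (α * r ^ 2)
      = (Real.sqrt α)⁻¹ := by
    rw [mul_assoc, hE, mul_one]
  linarith

lemma hasGradientAt_gauss (a : E) (C α : ℝ) (x : E) :
    HasGradientAt (fun y : E => C * Real.exp (-α * ‖y - a‖ ^ 2))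
      ((C * Real.exp (-α * ‖x - a‖ ^ 2) * (-(2 * α))) • (x - a)) x := by
  rw [hasGradientAt_iff_hasFDerivAt]
  have h1 : HasFDerivAt (fun y : E => y - a) (ContinuousLinearMap.id ℝ E) x :=
    (hasFDerivAt_id x).sub_const a
  have h2 : HasFDerivAt (fun y : E => (inner ℝ (y - a) (y - a) : ℝ))
      ((fderivInnerCLM ℝ (x - a, x - a)).comp
        ((ContinuousLinearMap.id ℝ E).prod (ContinuousLinearMap.id ℝ E))) x :=
    h1.inner ℝ h1
  have h3 := h2.const_mul (-α)
  have h4 := (Real.hasDerivAt_exp (-α * (inner ℝ (x - a) (x - a) : ℝ))).comp_hasFDerivAt x h3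
  have h5 := h4.const_mul C
  have heq : (C • Real.exp (-α * (inner ℝ (x - a) (x - a) : ℝ)) •
        (-α) • (fderivInnerCLM ℝ (x - a, x - a)).comp
          ((ContinuousLinearMap.id ℝ E).prod (ContinuousLinearMap.id ℝ E)))
      = InnerProductSpace.toDual ℝ E
          ((C * Real.exp (-α * ‖x - a‖ ^ 2) * (-(2 * α))) • (x - a)) := by
    ext v
    simp only [InnerProductSpace.toDual_apply_apply, ContinuousLinearMap.smul_apply,
      ContinuousLinearMap.coe_comp', Function.comp_apply, ContinuousLinearMap.prod_apply,
      ContinuousLinearMap.coe_id', id_eq, fderivInnerCLM_apply, real_inner_smul_left,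
      smul_eq_mul, real_inner_self_eq_norm_sq]
    rw [real_inner_comm v (x - a)]
    ring
  have hfun : (fun y : E => C * Real.exp (-α * ‖y - a‖ ^ 2))
      = fun y : E => C * Real.exp (-α * (inner ℝ (y - a) (y - a) : ℝ)) := by
    funext y; rw [real_inner_self_eq_norm_sq]
  rw [hfun]
  exact h5.congr_fderiv heq

end aux

set_option maxHeartbeats 2000000 in
/-- gradient of the single-cell objective
`H p = ∫_V φ q * k exp(-α‖p - q‖²) dq` is
`-2α ∫_V φ q * k exp(-α‖p-q‖²) • (p - q) dq = -M̃ • (p - C̃)`. -/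
theorem gradient_of_cell_objective {d : ℕ}
    (V : Set (EuclideanSpace ℝ (Fin d))) (hV : MeasurableSet V)
    (φ : EuclideanSpace ℝ (Fin d) → ℝ)
    (hφpos : ∀ q ∈ V, 0 ≤ φ q)
    (hφint : IntegrableOn φ V volume)
    (k α : ℝ) (hk : 0 < k) (hα : 0 < α)
    (p : EuclideanSpace ℝ (Fin d))
    (φt : EuclideanSpace ℝ (Fin d) → ℝ)
    (hφt : ∀ q, φt q = 2 * α * k * Real.exp (-α * ‖p - q‖ ^ 2) * φ q)
    (Mt : ℝ) (hMt : Mt = ∫ q in V, φt q) (hMtpos : 0 < Mt)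
    (Ct : EuclideanSpace ℝ (Fin d)) (hCt : Ct = (1 / Mt) • ∫ q in V, φt q • q) :
    HasGradientAt
      (fun x : EuclideanSpace ℝ (Fin d) =>
        ∫ q in V, φ q * (k * Real.exp (-α * ‖x - q‖ ^ 2)))
      ((-(2 * α)) • ∫ q in V, (φ q * (k * Real.exp (-α * ‖p - q‖ ^ 2))) • (p - q))
      p ∧
    ((-(2 * α)) • ∫ q in V, (φ q * (k * Real.exp (-α * ‖p - q‖ ^ 2))) • (p - q))
      = -Mt • (p - Ct) := by
  classical
  have hφm : AEStronglyMeasurable φ (volume.restrict V) := hφint.aestronglyMeasurable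
  have hcont : ∀ x : EuclideanSpace ℝ (Fin d),
      Continuous fun q : EuclideanSpace ℝ (Fin d) => Real.exp (-α * ‖x - q‖ ^ 2) := by
    intro x; fun_prop
  have hexp_le_one : ∀ x q : EuclideanSpace ℝ (Fin d), Real.exp (-α * ‖x - q‖ ^ 2) ≤ 1 := by
    intro x q
    apply Real.exp_le_one_iff.2
    nlinarith [sq_nonneg ‖x - q‖]
  have hexp_pos : ∀ x q : EuclideanSpace ℝ (Fin d), 0 < Real.exp (-α * ‖x - q‖ ^ 2) :=
    fun x q => Real.exp_pos _
  have hkey : ∀ x q : EuclideanSpace ℝ (Fin d),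
      Real.exp (-α * ‖x - q‖ ^ 2) * ‖x - q‖ ≤ (Real.sqrt α)⁻¹ :=
    fun x q => gauss_mul_le α hα ‖x - q‖ (norm_nonneg _)
  have hgm : AEStronglyMeasurable
      (fun q : EuclideanSpace ℝ (Fin d) =>
        (φ q * (k * Real.exp (-α * ‖p - q‖ ^ 2))) • (p - q)) (volume.restrict V) := by
    apply AEStronglyMeasurable.smul (f := fun q => φ q * (k * Real.exp (-α * ‖p - q‖ ^ 2)))
      (g := fun q => p - q)
    · exact hφm.mul ((continuous_const.mul (hcont p)).aestronglyMeasurable)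
    · exact (continuous_const.sub continuous_id).aestronglyMeasurable
  have hint_g : Integrable
      (fun q : EuclideanSpace ℝ (Fin d) =>
        (φ q * (k * Real.exp (-α * ‖p - q‖ ^ 2))) • (p - q)) (volume.restrict V) := by
    refine Integrable.mono' ((hφint.norm).const_mul (k * (Real.sqrt α)⁻¹)) hgm ?_
    filter_upwards with q
    rw [norm_smul]
    have h1 := hkey p q
    have h2 := hexp_pos p q
    have h3 : ‖φ q * (k * Real.exp (-α * ‖p - q‖ ^ 2))‖
        = |φ q| * (k * Real.exp (-α * ‖p - q‖ ^ 2)) := by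
      rw [Real.norm_eq_abs, abs_mul, abs_of_pos (show (0:ℝ) < k * Real.exp (-α * ‖p - q‖ ^ 2)
        by positivity)]
    rw [h3]
    have h4 : 0 ≤ |φ q| := abs_nonneg _
    have h5 : ‖φ q‖ = |φ q| := rfl
    rw [h5]
    nlinarith [norm_nonneg (p - q), mul_le_mul_of_nonneg_left h1
      (show (0:ℝ) ≤ k * |φ q| from mul_nonneg hk.le (abs_nonneg _))]
  have hint_g' : Integrable
      (fun q : EuclideanSpace ℝ (Fin d) =>
        ((φ q * k) * Real.exp (-α * ‖p - q‖ ^ 2) * (-(2 * α))) • (p - q)) (volume.restrict V) := by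
    have h := hint_g.smul (-(2 * α))
    apply h.congr
    filter_upwards with q
    simp only [Pi.smul_apply, smul_smul]
    exact congrArg (fun r : ℝ => r • (p - q)) (by ring)
  set F' : EuclideanSpace ℝ (Fin d) → EuclideanSpace ℝ (Fin d) →
      (EuclideanSpace ℝ (Fin d) →L[ℝ] ℝ) := fun x q =>
    InnerProductSpace.toDual ℝ (EuclideanSpace ℝ (Fin d))
      (((φ q * k) * Real.exp (-α * ‖x - q‖ ^ 2) * (-(2 * α))) • (x - q)) with hF'
  have key : HasFDerivAt
      (fun x : EuclideanSpace ℝ (Fin d) => ∫ q in V, φ q * (k * Real.exp (-α * ‖x - q‖ ^ 2)))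
      (∫ q in V, F' p q) p := by
    apply hasFDerivAt_integral_of_dominated_of_fderiv_le
      (F := fun x q => φ q * (k * Real.exp (-α * ‖x - q‖ ^ 2))) (F' := F')
      (bound := fun q => (2 * α * k * (Real.sqrt α)⁻¹) * |φ q|)
      (s := Set.univ) Filter.univ_mem
    · filter_upwards with x
      exact hφm.mul ((continuous_const.mul (hcont x)).aestronglyMeasurable)
    · refine Integrable.mono' ((hφint.norm).const_mul k)
        (hφm.mul ((continuous_const.mul (hcont p)).aestronglyMeasurable)) ?_
      filter_upwards with q
      have h1 := hexp_le_one p q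
      have h2 := hexp_pos p q
      rw [Real.norm_eq_abs, abs_mul, abs_of_pos (by positivity :
        (0:ℝ) < k * Real.exp (-α * ‖p - q‖ ^ 2))]
      have h4 : 0 ≤ |φ q| := abs_nonneg _
      have h5 : ‖φ q‖ = |φ q| := rfl
      rw [h5]
      nlinarith [mul_le_mul_of_nonneg_left h1 (show (0:ℝ) ≤ |φ q| * k from
        mul_nonneg (abs_nonneg _) hk.le)]
    · exact (InnerProductSpace.toDual ℝ
        (EuclideanSpace ℝ (Fin d))).continuous.comp_aestronglyMeasurable
        hint_g'.aestronglyMeasurable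
    · filter_upwards with q x _
      rw [hF']
      rw [LinearIsometryEquiv.norm_map, norm_smul]
      have h1 := hkey x q
      have h2 := hexp_pos x q
      have h3 : ‖φ q * k * Real.exp (-α * ‖x - q‖ ^ 2) * -(2 * α)‖
          = |φ q| * k * Real.exp (-α * ‖x - q‖ ^ 2) * (2 * α) := by
        rw [Real.norm_eq_abs, abs_mul, abs_mul, abs_mul, abs_of_pos hk, abs_of_pos h2, abs_neg,
          abs_of_pos (by positivity : (0:ℝ) < 2 * α)]
      rw [h3]
      have h4 : 0 ≤ |φ q| := abs_nonneg _
      nlinarith [norm_nonneg (x - q), mul_le_mul_of_nonneg_left h1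
        (show (0:ℝ) ≤ 2 * α * k * |φ q| by positivity)]
    · exact (hφint.norm).const_mul _
    · filter_upwards with q x _
      have h := (hasGradientAt_gauss (E := EuclideanSpace ℝ (Fin d)) q (φ q * k) α x).hasFDerivAt
      rw [hF']
      have hfe : (fun y : EuclideanSpace ℝ (Fin d) =>
          (φ q * k) * Real.exp (-α * ‖y - q‖ ^ 2))
          = fun y : EuclideanSpace ℝ (Fin d) => φ q * (k * Real.exp (-α * ‖y - q‖ ^ 2)) := by
        funext y; ring
      rw [hfe] at h
      exact h
  have hL : (∫ q in V, F' p q)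
      = InnerProductSpace.toDual ℝ (EuclideanSpace ℝ (Fin d))
        ((-(2 * α)) • ∫ q in V, (φ q * (k * Real.exp (-α * ‖p - q‖ ^ 2))) • (p - q)) := by
    rw [hF']
    have h := ContinuousLinearMap.integral_comp_comm
      ((InnerProductSpace.toDual ℝ
        (EuclideanSpace ℝ (Fin d))).toLinearIsometry.toContinuousLinearMap) hint_g'
    simp only [LinearIsometry.coe_toContinuousLinearMap,
      LinearIsometryEquiv.coe_toLinearIsometry] at h
    rw [h]
    congr 1
    rw [← integral_smul]
    congr 1
    funext q
    rw [smul_smul]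
    exact congrArg (fun r : ℝ => r • (p - q)) (by ring)
  have hgrad : HasGradientAt
      (fun x : EuclideanSpace ℝ (Fin d) =>
        ∫ q in V, φ q * (k * Real.exp (-α * ‖x - q‖ ^ 2)))
      ((-(2 * α)) • ∫ q in V, (φ q * (k * Real.exp (-α * ‖p - q‖ ^ 2))) • (p - q)) p := by
    rw [hasGradientAt_iff_hasFDerivAt, ← hL]
    exact key
  refine ⟨hgrad, ?_⟩
  have hφtm : AEStronglyMeasurable φt (volume.restrict V) := by
    have h : φt = fun q => (2 * α * k * Real.exp (-α * ‖p - q‖ ^ 2)) * φ q := by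
      funext q; rw [hφt q]
    rw [h]
    exact ((continuous_const.mul (hcont p)).aestronglyMeasurable).mul hφm
  have hφt_int : Integrable φt (volume.restrict V) := by
    refine Integrable.mono' ((hφint.norm).const_mul (2 * α * k)) hφtm ?_
    filter_upwards with q
    rw [hφt q, Real.norm_eq_abs]
    have h1 := hexp_le_one p q
    have h2 := hexp_pos p q
    rw [abs_mul, abs_of_pos (by positivity : (0:ℝ) < 2 * α * k * Real.exp (-α * ‖p - q‖ ^ 2))]
    have h4 : 0 ≤ |φ q| := abs_nonneg _
    have h5 : ‖φ q‖ = |φ q| := rfl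
    rw [h5]
    nlinarith [mul_le_mul_of_nonneg_left h1 (show (0:ℝ) ≤ 2 * α * k * |φ q| by positivity)]
  have hφtq_int : Integrable
      (fun q : EuclideanSpace ℝ (Fin d) => φt q • q) (volume.restrict V) := by
    refine Integrable.mono'
      ((hφint.norm).const_mul (2 * α * k * ((Real.sqrt α)⁻¹ + ‖p‖)))
      (hφtm.smul (continuous_id.aestronglyMeasurable)) ?_
    filter_upwards with q
    rw [norm_smul, hφt q, Real.norm_eq_abs]
    have h1 := hexp_le_one p q
    have h2 := hexp_pos p q
    have h3 := hkey p q
    have hq : ‖q‖ ≤ ‖p - q‖ + ‖p‖ := by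
      calc ‖q‖ = ‖(q - p) + p‖ := by rw [sub_add_cancel]
      _ ≤ ‖q - p‖ + ‖p‖ := norm_add_le _ _
      _ = ‖p - q‖ + ‖p‖ := by rw [norm_sub_rev]
    rw [abs_mul, abs_of_pos (by positivity : (0:ℝ) < 2 * α * k * Real.exp (-α * ‖p - q‖ ^ 2))]
    have h4 : 0 ≤ |φ q| := abs_nonneg _
    have h5 : ‖φ q‖ = |φ q| := rfl
    rw [h5]
    have h6 : 0 ≤ ‖p‖ := norm_nonneg _
    nlinarith [norm_nonneg q, norm_nonneg (p - q), mul_le_mul_of_nonneg_left hq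
      (by positivity : (0:ℝ) ≤ 2 * α * k * Real.exp (-α * ‖p - q‖ ^ 2) * |φ q|),
      mul_le_mul_of_nonneg_left h3 (by positivity : (0:ℝ) ≤ 2 * α * k * |φ q|),
      mul_le_mul_of_nonneg_left h1 (by positivity : (0:ℝ) ≤ 2 * α * k * |φ q| * ‖p‖)]
  have h2a : (2 * α) • (∫ q in V, (φ q * (k * Real.exp (-α * ‖p - q‖ ^ 2))) • (p - q))
      = ∫ q in V, φt q • (p - q) := by
    rw [← integral_smul]
    congr 1
    funext q
    rw [smul_smul, hφt q]
    congr 1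
    ring
  have h2b : (∫ q in V, φt q • (p - q)) = Mt • p - Mt • Ct := by
    have hs : (fun q : EuclideanSpace ℝ (Fin d) => φt q • (p - q))
        = fun q : EuclideanSpace ℝ (Fin d) => φt q • p - φt q • q := by
      funext q; rw [smul_sub]
    rw [hs, integral_sub (hφt_int.smul_const p) hφtq_int, integral_smul_const, ← hMt]
    congr 1
    rw [hCt, smul_smul, mul_one_div, div_self hMtpos.ne', one_smul]
  calc ((-(2 * α)) • ∫ q in V, (φ q * (k * Real.exp (-α * ‖p - q‖ ^ 2))) • (p - q))
      = -((2 * α) • ∫ q in V, (φ q * (k * Real.exp (-α * ‖p - q‖ ^ 2))) • (p - q)) := by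
        rw [neg_smul]
    _ = -(Mt • p - Mt • Ct) := by rw [h2a, h2b]
    _ = -Mt • (p - Ct) := by module
end
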